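/- If A is a set of vectors in {0,1}^d such that any two vectors in A have Hamming distance at most 2t+1, and d > 2t+1, then |A| ≤ 2·∑_{i=0}^{t} C(d-1,i). -/

import Mathlib

/-- Hamming distance between binary vectors. -/
def distB {d : ℕ} (u v : Fin d → Bool) : ℕ :=
  (Finset.univ.filter (fun i => u i ≠ v i)).card

/-- Hamming distance between vectors in {0,1,*}^d (entries `Option Bool`, `none` = joker):
counts coordinates where both entries are non-joker and differ. -/
def distS {d : ℕ} (u v : Fin d → Option Bool) : ℕ :=
  (Finset.univ.filter (fun i => ∃ a b : Bool, u i = some a ∧ v i = some b ∧ a ≠ b)).card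

/-- `v ∈ {0,1}^d` is covered by `u ∈ {0,1,*}^d` if they agree on all non-joker coordinates of `u`. -/
def covers {d : ℕ} (u : Fin d → Option Bool) (v : Fin d → Bool) : Prop :=
  ∀ i : Fin d, ∀ b : Bool, u i = some b → v i = b

/-- Number of joker (`*`) coordinates of `u`. -/
def jokers {d : ℕ} (u : Fin d → Option Bool) : ℕ :=
  (Finset.univ.filter (fun i => u i = none)).card

/-- Hamming weight of a binary vector. -/
def weight {d : ℕ} (v : Fin d → Bool) : ℕ :=
  (Finset.univ.filter (fun i => v i = true)).card
open Finset FinsetFamily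
open scoped symmDiff

namespace Kl
variable {α : Type*} [DecidableEq α]

/-! ### Arithmetic -/

lemma choose_le_choose_succ {n k : ℕ} (h : 2 * (k + 1) ≤ n) : n.choose k ≤ n.choose (k + 1) := by
  have h2 : n.choose k * (k + 1) ≤ n.choose k * (n - k) := by
    apply Nat.mul_le_mul_left; omega
  rw [← Nat.choose_succ_right_eq] at h2
  exact Nat.le_of_mul_le_mul_right h2 (Nat.succ_pos k)

lemma choose_mono_half {n a b : ℕ} (hab : a ≤ b) (hb : 2 * b ≤ n) : n.choose a ≤ n.choose b := by
  induction b with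
  | zero => have : a = 0 := by omega
            simp [this]
  | succ b ih =>
    rcases Nat.eq_or_lt_of_le hab with rfl | h
    · exact le_rfl
    · exact le_trans (ih (by omega) (by omega)) (choose_le_choose_succ hb)

lemma choose_anti {n i j : ℕ} (hij : i ≤ j) (hn : n ≤ i + j) : n.choose j ≤ n.choose i := by
  rcases le_or_gt j n with hjn | hjn
  · rcases le_or_gt (2 * i) n with hi | hi
    · rw [← Nat.choose_symm hjn]
      exact choose_mono_half (by omega) (by omega)
    · have hin : i ≤ n := le_trans hij hjn
      rw [← Nat.choose_symm hjn, ← Nat.choose_symm hin]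
      exact choose_mono_half (by omega) (by omega)
  · rw [Nat.choose_eq_zero_of_lt hjn]; exact Nat.zero_le _

lemma sum_choose_id (e t : ℕ) :
    ∑ i ∈ range (t + 1), (e + 1).choose i + e.choose t
      = 2 * ∑ i ∈ range (t + 1), e.choose i := by
  induction t with
  | zero => simp
  | succ t ih =>
    rw [sum_range_succ, sum_range_succ (f := fun i => e.choose i)]
    have hp : (e + 1).choose (t + 1) = e.choose t + e.choose (t + 1) := Nat.choose_succ_succ e t
    omega

/-! ### Relative local LYM -/

lemma rel_lym (G : Finset α) {r : ℕ} (hr : 1 ≤ r) (ℬ : Finset (Finset α))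
    (hsub : ∀ B ∈ ℬ, B ⊆ G) (hsized : ∀ B ∈ ℬ, #B = r) :
    #ℬ * r ≤ #(∂ ℬ) * (#G - r + 1) := by
  classical
  rcases ℬ.eq_empty_or_nonempty with rfl | hne
  · simp
  have hrG : r ≤ #G := by
    obtain ⟨B, hB⟩ := hne
    rw [← hsized B hB]; exact card_le_card (hsub B hB)
  have hS : Set.Sized r (ℬ : Set (Finset α)) := fun B hB => hsized B hB
  refine card_mul_le_card_mul' (· ⊆ ·) ?_ ?_
  · intro B hB
    have hsubs : B.image B.erase ⊆ (∂ ℬ).bipartiteBelow (· ⊆ ·) B := by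
      intro T hT
      rw [mem_bipartiteBelow]
      obtain ⟨x, hx, rfl⟩ := mem_image.1 hT
      exact ⟨erase_mem_shadow hB hx, erase_subset _ _⟩
    calc r = #B := (hsized B hB).symm
    _ = #(B.image B.erase) := (card_image_of_injOn B.erase_injOn).symm
    _ ≤ _ := card_le_card hsubs
  · intro T hT
    have hTcard : #T = r - 1 := hS.shadow hT
    obtain ⟨B₀, hB₀, hTB₀⟩ := exists_subset_of_mem_shadow hT
    have hTG : T ⊆ G := hTB₀.trans (hsub B₀ hB₀)
    have hsubs : ℬ.bipartiteAbove (· ⊆ ·) T ⊆ (G \ T).image (fun a => insert a T) := by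
      intro B hB
      rw [mem_bipartiteAbove] at hB
      obtain ⟨hB, hTB⟩ := hB
      have hc : #(B \ T) = 1 := by
        rw [card_sdiff_of_subset hTB, hsized B hB, hTcard]; omega
      obtain ⟨a, ha⟩ := card_eq_one.1 hc
      have haB : a ∈ B ∧ a ∉ T := by
        have : a ∈ B \ T := by rw [ha]; exact mem_singleton_self a
        exact ⟨(mem_sdiff.1 this).1, (mem_sdiff.1 this).2⟩
      refine mem_image.2 ⟨a, mem_sdiff.2 ⟨hsub B hB haB.1, haB.2⟩, ?_⟩
      have : T ∪ B \ T = B := union_sdiff_of_subset hTB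
      rw [← this, ha, union_comm, insert_eq]
    calc #(ℬ.bipartiteAbove (· ⊆ ·) T) ≤ #((G \ T).image (fun a => insert a T)) :=
          card_le_card hsubs
    _ ≤ #(G \ T) := card_image_le
    _ = #G - r + 1 := by rw [card_sdiff_of_subset hTG, hTcard]; omega

/-! ### Iterated LYM -/

lemma iter_lym (G : Finset α) (a : ℕ) (𝒜 : Finset (Finset α))
    (hsub : ∀ A ∈ 𝒜, A ⊆ G) (hsized : ∀ A ∈ 𝒜, #A = a) :
    ∀ k, k ≤ a → #𝒜 * (#G).choose (a - k) ≤ #(∂^[k] 𝒜) * (#G).choose a := by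
  intro k
  induction k with
  | zero => intro _; simp
  | succ k ih =>
    intro hk1
    rcases 𝒜.eq_empty_or_nonempty with rfl | hne
    · simp
    have haG : a ≤ #G := by
      obtain ⟨A, hA⟩ := hne
      rw [← hsized A hA]; exact card_le_card (hsub A hA)
    have hk : k ≤ a := by omega
    have IH := ih hk
    have hSa : Set.Sized a (𝒜 : Set (Finset α)) := fun A hA => hsized A hA
    have hBsub : ∀ B ∈ ∂^[k] 𝒜, B ⊆ G := by
      intro B hB
      obtain ⟨s, hs, hBs, -⟩ := mem_shadow_iterate_iff_exists_sdiff.1 hB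
      exact hBs.trans (hsub s hs)
    have hBsized : ∀ B ∈ ∂^[k] 𝒜, #B = a - k := fun B hB => hSa.shadow_iterate hB
    have hj1 : 1 ≤ a - k := by omega
    have L := rel_lym G hj1 (∂^[k] 𝒜) hBsub hBsized
    have hid : (#G).choose (a - k - 1) * (#G - (a - k) + 1) = (#G).choose (a - k) * (a - k) := by
      have h1 := Nat.choose_succ_right_eq (#G) (a - k - 1)
      have h2 : a - k - 1 + 1 = a - k := by omega
      have h3 : #G - (a - k - 1) = #G - (a - k) + 1 := by omega
      rw [h2] at h1
      rw [← h3, ← h1]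
    have step1 : (#𝒜 * (#G).choose (a - k - 1)) * (#G - (a - k) + 1) ≤
        (#(∂^[k + 1] 𝒜) * (#G).choose a) * (#G - (a - k) + 1) := by
      calc (#𝒜 * (#G).choose (a - k - 1)) * (#G - (a - k) + 1)
          = #𝒜 * ((#G).choose (a - k) * (a - k)) := by rw [← hid]; ring
      _ = (#𝒜 * (#G).choose (a - k)) * (a - k) := by ring
      _ ≤ (#(∂^[k] 𝒜) * (#G).choose a) * (a - k) := Nat.mul_le_mul_right _ IH
      _ = (#(∂^[k] 𝒜) * (a - k)) * (#G).choose a := by ring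
      _ ≤ (#(∂ (∂^[k] 𝒜)) * (#G - (a - k) + 1)) * (#G).choose a := Nat.mul_le_mul_right _ L
      _ = (#(∂^[k + 1] 𝒜) * (#G).choose a) * (#G - (a - k) + 1) := by
            rw [Function.iterate_succ_apply']; ring
    have hpos : 0 < #G - (a - k) + 1 := by omega
    have h5 := Nat.le_of_mul_le_mul_right step1 hpos
    have h6 : a - (k + 1) = a - k - 1 := by omega
    rw [h6]
    exact h5

lemma shadow_card_ge_of_small_ground (G : Finset α) {a t : ℕ} (𝒜 : Finset (Finset α))
    (hsub : ∀ A ∈ 𝒜, A ⊆ G) (hsized : ∀ A ∈ 𝒜, #A = a) (hta : t ≤ a)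
    (hG : #G ≤ 2 * a - t) : #𝒜 ≤ #(∂^[t] 𝒜) := by
  rcases 𝒜.eq_empty_or_nonempty with rfl | hne
  · simp
  have haG : a ≤ #G := by
    obtain ⟨A, hA⟩ := hne
    rw [← hsized A hA]; exact card_le_card (hsub A hA)
  have h1 := iter_lym G a 𝒜 hsub hsized t hta
  have h2 : (#G).choose a ≤ (#G).choose (a - t) := choose_anti (by omega) (by omega)
  have h3 : #𝒜 * (#G).choose a ≤ #(∂^[t] 𝒜) * (#G).choose a :=
    le_trans (Nat.mul_le_mul_left _ h2) h1
  exact Nat.le_of_mul_le_mul_right h3 (Nat.choose_pos haG)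

variable {α : Type*} [DecidableEq α]

/-! ### Singleton UV compressions -/

lemma compress_stay {i x : α} {A : Finset α} (h : i ∈ A ∨ x ∉ A) :
    UV.compress {i} {x} A = A := by
  rw [UV.compress, if_neg]
  rintro ⟨h1, h2⟩
  rw [disjoint_singleton_left] at h1
  have h2' : x ∈ A := singleton_subset_iff.1 h2
  tauto

lemma compress_move {i x : α} {A : Finset α} (hiA : i ∉ A) (hxA : x ∈ A) (hix : i ≠ x) :
    UV.compress {i} {x} A = insert i (A.erase x) := by
  rw [UV.compress, if_pos]
  · rw [sup_eq_union, sdiff_singleton_eq_erase, union_comm, ← insert_eq, erase_insert_of_ne hix]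
  · exact ⟨disjoint_singleton_left.2 hiA, singleton_subset_iff.2 hxA⟩

/-- Structure of members of a singleton compression. -/
lemma mem_cases {i x : α} {𝒜 : Finset (Finset α)} {C : Finset α} (hix : i ≠ x)
    (h : C ∈ 𝓒 {i} {x} 𝒜) :
    (C ∈ 𝒜 ∧ UV.compress {i} {x} C ∈ 𝒜) ∨
      (∃ B ∈ 𝒜, i ∉ B ∧ x ∈ B ∧ C = insert i (B.erase x) ∧ C ∉ 𝒜) := by
  rcases UV.mem_compression.1 h with h1 | ⟨hC, B, hB, hBC⟩
  · exact Or.inl h1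
  · right
    by_cases hmove : i ∉ B ∧ x ∈ B
    · refine ⟨B, hB, hmove.1, hmove.2, ?_, hC⟩
      rw [← hBC, compress_move hmove.1 hmove.2 hix]
    · exfalso
      rw [compress_stay (by tauto)] at hBC
      exact hC (hBC ▸ hB)

/-- Singleton compressions preserve `t`-intersecting. -/
lemma inter_compress {i x : α} (hix : i ≠ x) {t : ℕ} {𝒜 : Finset (Finset α)}
    (h : ∀ A ∈ 𝒜, ∀ B ∈ 𝒜, t ≤ #(A ∩ B)) :
    ∀ A ∈ 𝓒 {i} {x} 𝒜, ∀ B ∈ 𝓒 {i} {x} 𝒜, t ≤ #(A ∩ B) := by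
  have mixed : ∀ A ∈ 𝒜, i ∉ A → x ∈ A → ∀ B' ∈ 𝒜, UV.compress {i} {x} B' ∈ 𝒜 →
      t ≤ #(insert i (A.erase x) ∩ B') := by
    intro A hA hiA hxA B' hB' hcB'
    by_cases hxB : x ∈ B'
    · by_cases hiB : i ∈ B'
      · have hsub : insert i ((A ∩ B').erase x) ⊆ insert i (A.erase x) ∩ B' := by
          intro e he
          rcases mem_insert.1 he with rfl | he
          · exact mem_inter.2 ⟨mem_insert_self _ _, hiB⟩
          · rw [mem_erase, mem_inter] at he
            exact mem_inter.2 ⟨mem_insert_of_mem (mem_erase.2 ⟨he.1, he.2.1⟩), he.2.2⟩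
        have hcard : #(insert i ((A ∩ B').erase x)) = #(A ∩ B') := by
          rw [card_insert_of_notMem (fun hc => hiA (mem_inter.1 (mem_of_mem_erase hc)).1),
            card_erase_of_mem (mem_inter.2 ⟨hxA, hxB⟩)]
          have : 1 ≤ #(A ∩ B') := card_pos.2 ⟨x, mem_inter.2 ⟨hxA, hxB⟩⟩
          omega
        calc t ≤ #(A ∩ B') := h A hA B' hB'
        _ = #(insert i ((A ∩ B').erase x)) := hcard.symm
        _ ≤ _ := card_le_card hsub
      · rw [compress_move hiB hxB hix] at hcB'
        have h2 := h A hA _ hcB'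
        have heq : A ∩ insert i (B'.erase x) = (A ∩ B').erase x := by
          ext e
          simp only [mem_inter, mem_insert, mem_erase]
          constructor
          · rintro ⟨heA, rfl | ⟨hex, heB⟩⟩
            · exact absurd heA hiA
            · exact ⟨hex, heA, heB⟩
          · rintro ⟨hex, heA, heB⟩
            exact ⟨heA, Or.inr ⟨hex, heB⟩⟩
        rw [heq] at h2
        refine le_trans h2 (card_le_card ?_)
        intro e he
        rw [mem_erase, mem_inter] at he
        exact mem_inter.2 ⟨mem_insert_of_mem (mem_erase.2 ⟨he.1, he.2.1⟩), he.2.2⟩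
    · -- x ∉ B'
      refine le_trans (h A hA B' hB') (card_le_card ?_)
      intro e he
      rw [mem_inter] at he
      have hex : e ≠ x := fun hc => hxB (hc ▸ he.2)
      exact mem_inter.2 ⟨mem_insert_of_mem (mem_erase.2 ⟨hex, he.1⟩), he.2⟩
  intro A hA B hB
  rcases mem_cases hix hA with ⟨hA1, hA2⟩ | ⟨A₀, hA₀, hiA₀, hxA₀, rfl, hAn⟩ <;>
    rcases mem_cases hix hB with ⟨hB1, hB2⟩ | ⟨B₀, hB₀, hiB₀, hxB₀, rfl, hBn⟩
  · exact h A hA1 B hB1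
  · rw [inter_comm]
    exact mixed B₀ hB₀ hiB₀ hxB₀ A hA1 hA2
  · exact mixed A₀ hA₀ hiA₀ hxA₀ B hB1 hB2
  · -- both moved
    have hsub : insert i ((A₀ ∩ B₀).erase x) ⊆
        insert i (A₀.erase x) ∩ insert i (B₀.erase x) := by
      intro e he
      rcases mem_insert.1 he with rfl | he
      · exact mem_inter.2 ⟨mem_insert_self _ _, mem_insert_self _ _⟩
      · rw [mem_erase, mem_inter] at he
        exact mem_inter.2 ⟨mem_insert_of_mem (mem_erase.2 ⟨he.1, he.2.1⟩),
          mem_insert_of_mem (mem_erase.2 ⟨he.1, he.2.2⟩)⟩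
    have hcard : #(insert i ((A₀ ∩ B₀).erase x)) = #(A₀ ∩ B₀) := by
      rw [card_insert_of_notMem (fun hc => hiA₀ (mem_inter.1 (mem_of_mem_erase hc)).1),
        card_erase_of_mem (mem_inter.2 ⟨hxA₀, hxB₀⟩)]
      have : 1 ≤ #(A₀ ∩ B₀) := card_pos.2 ⟨x, mem_inter.2 ⟨hxA₀, hxB₀⟩⟩
      omega
    calc t ≤ #(A₀ ∩ B₀) := h A₀ hA₀ B₀ hB₀
    _ = _ := hcard.symm
    _ ≤ _ := card_le_card hsub

lemma huv_singleton (i x : α) (𝒜 : Finset (Finset α)) :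
    ∀ y ∈ ({i} : Finset α), ∃ z ∈ ({x} : Finset α),
      UV.IsCompressed (({i} : Finset α).erase y) (({x} : Finset α).erase z) 𝒜 := by
  intro y hy
  refine ⟨x, mem_singleton_self x, ?_⟩
  rw [mem_singleton.1 hy, erase_singleton, erase_singleton]
  exact UV.compression_self ∅ 𝒜

lemma card_shadow_iterate_compression_le (i x : α) (k : ℕ) :
    ∀ 𝒜 : Finset (Finset α), #(∂^[k] (𝓒 {i} {x} 𝒜)) ≤ #(∂^[k] 𝒜) := by
  induction k with
  | zero => intro 𝒜; simp [UV.card_compression]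
  | succ k ih =>
    intro 𝒜
    rw [Function.iterate_succ_apply, Function.iterate_succ_apply]
    calc #(∂^[k] (∂ (𝓒 {i} {x} 𝒜)))
        ≤ #(∂^[k] (𝓒 {i} {x} (∂ 𝒜))) := card_le_card <| (shadow_monotone.iterate k) <|
            UV.shadow_compression_subset_compression_shadow _ _ (huv_singleton i x 𝒜)
    _ ≤ #(∂^[k] (∂ 𝒜)) := ih (∂ 𝒜)

/-- If all compressions stay inside, the family is compressed. -/
lemma isCompressed_of_all {i x : α} {𝒜 : Finset (Finset α)}
    (hall : ∀ B ∈ 𝒜, UV.compress {i} {x} B ∈ 𝒜) : UV.IsCompressed {i} {x} 𝒜 := by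
  unfold UV.IsCompressed
  ext C
  rw [UV.mem_compression]
  constructor
  · rintro (⟨hC, -⟩ | ⟨hC, B, hB, rfl⟩)
    · exact hC
    · exact hall B hB
  · intro hC
    exact Or.inl ⟨hC, hall C hC⟩

/-- Strict decrease of the number of sets containing `x` under a proper compression. -/
lemma measure_lt {i x : α} (hix : i ≠ x) {𝒜 : Finset (Finset α)}
    (h : ¬ UV.IsCompressed {i} {x} 𝒜) :
    #((𝓒 {i} {x} 𝒜).filter fun A => x ∈ A) < #(𝒜.filter fun A => x ∈ A) := by
  obtain ⟨B, hB, hcB⟩ : ∃ B ∈ 𝒜, UV.compress {i} {x} B ∉ 𝒜 := by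
    by_contra hall
    push_neg at hall
    exact h (isCompressed_of_all hall)
  have hmove : i ∉ B ∧ x ∈ B := by
    by_contra hc
    rw [compress_stay (by tauto)] at hcB
    exact hcB hB
  have hsub : (𝓒 {i} {x} 𝒜).filter (fun A => x ∈ A) ⊆ 𝒜.filter fun A => x ∈ A := by
    intro C hC
    rw [mem_filter] at hC ⊢
    obtain ⟨hC1, hC2⟩ := hC
    rcases mem_cases hix hC1 with ⟨h1, -⟩ | ⟨B', hB', hiB', hxB', rfl, -⟩
    · exact ⟨h1, hC2⟩
    · exfalso
      rcases mem_insert.1 hC2 with hc | hc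
      · exact hix hc.symm
      · exact (notMem_erase x B') hc
  have hBin : B ∈ 𝒜.filter fun A => x ∈ A := mem_filter.2 ⟨hB, hmove.2⟩
  have hBout : B ∉ (𝓒 {i} {x} 𝒜).filter fun A => x ∈ A := by
    rw [mem_filter]
    rintro ⟨hB1, -⟩
    rcases mem_cases hix hB1 with ⟨-, h2⟩ | ⟨B', hB', hiB', hxB', heq, hBn⟩
    · exact hcB h2
    · exact hBn hB
  exact card_lt_card ((ssubset_iff_of_subset hsub).2 ⟨B, hBin, hBout⟩)

/-- Existence of a fully shifted (towards `x`) family. -/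
lemma exists_shifted (G : Finset α) (x : α) (hxG : x ∈ G) {a t : ℕ} :
    ∀ N (𝒜 : Finset (Finset α)), #(𝒜.filter fun A => x ∈ A) ≤ N →
    (∀ A ∈ 𝒜, A ⊆ G) → (∀ A ∈ 𝒜, #A = a) → (∀ A ∈ 𝒜, ∀ B ∈ 𝒜, t ≤ #(A ∩ B)) →
    ∃ ℬ : Finset (Finset α), #ℬ = #𝒜 ∧ (∀ B ∈ ℬ, B ⊆ G) ∧ (∀ B ∈ ℬ, #B = a) ∧
      (∀ A ∈ ℬ, ∀ B ∈ ℬ, t ≤ #(A ∩ B)) ∧ (∀ k, #(∂^[k] ℬ) ≤ #(∂^[k] 𝒜)) ∧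
      (∀ i ∈ G, i ≠ x → UV.IsCompressed {i} {x} ℬ) := by
  intro N
  induction N with
  | zero =>
    intro 𝒜 hN hsub hsized hint
    by_cases hready : ∀ i ∈ G, i ≠ x → UV.IsCompressed {i} {x} 𝒜
    · exact ⟨𝒜, rfl, hsub, hsized, hint, fun k => le_rfl, hready⟩
    · exfalso
      push_neg at hready
      obtain ⟨i, hiG, hix, hnc⟩ := hready
      have := measure_lt hix hnc
      omega
  | succ N ih =>
    intro 𝒜 hN hsub hsized hint
    by_cases hready : ∀ i ∈ G, i ≠ x → UV.IsCompressed {i} {x} 𝒜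
    · exact ⟨𝒜, rfl, hsub, hsized, hint, fun k => le_rfl, hready⟩
    · push_neg at hready
      obtain ⟨i, hiG, hix, hnc⟩ := hready
      have hlt := measure_lt hix hnc
      set 𝒜' := 𝓒 {i} {x} 𝒜 with h𝒜'
      have hsub' : ∀ A ∈ 𝒜', A ⊆ G := by
        intro A hA
        rcases mem_cases hix hA with ⟨h1, -⟩ | ⟨B, hB, hiB, hxB, rfl, -⟩
        · exact hsub A h1
        · exact insert_subset hiG ((erase_subset _ _).trans (hsub B hB))
      have hsized' : ∀ A ∈ 𝒜', #A = a :=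
        fun A hA => Set.Sized.uvCompression (by simp) (fun B hB => hsized B hB) hA
      have hint' : ∀ A ∈ 𝒜', ∀ B ∈ 𝒜', t ≤ #(A ∩ B) := inter_compress hix hint
      obtain ⟨ℬ, h1, h2, h3, h4, h5, h6⟩ := ih 𝒜' (by omega) hsub' hsized' hint'
      refine ⟨ℬ, ?_, h2, h3, h4, ?_, h6⟩
      · rw [h1, h𝒜', UV.card_compression]
      · intro k
        exact le_trans (h5 k) (card_shadow_iterate_compression_le i x k 𝒜)


/-- **Katona's intersecting shadow theorem** (relative version). -/
theorem ksh : ∀ (n : ℕ) (G : Finset α), #G ≤ n → ∀ (a t : ℕ) (𝒜 : Finset (Finset α)),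
    (∀ A ∈ 𝒜, A ⊆ G) → (∀ A ∈ 𝒜, #A = a) →
    (∀ A ∈ 𝒜, ∀ B ∈ 𝒜, t ≤ #(A ∩ B)) → t ≤ a → #𝒜 ≤ #(∂^[t] 𝒜) := by
  intro n
  induction n with
  | zero =>
    intro G hG a t 𝒜 hsub hsized hint hta
    rcases 𝒜.eq_empty_or_nonempty with rfl | hne
    · simp
    obtain ⟨A, hA⟩ := hne
    have h1 : #A = 0 := by
      have hGe : G = ∅ := card_eq_zero.1 (by omega)
      have := card_le_card ((hsub A hA).trans (subset_of_eq hGe))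
      simpa using this
    have ht0 : t = 0 := by have := hsized A hA; omega
    subst ht0
    simp
  | succ n ih =>
    intro G hG a t 𝒜 hsub hsized hint hta
    rcases 𝒜.eq_empty_or_nonempty with rfl | hne
    · simp
    rcases Nat.eq_zero_or_pos t with rfl | ht
    · simp
    have haG : a ≤ #G := by
      obtain ⟨A, hA⟩ := hne
      rw [← hsized A hA]; exact card_le_card (hsub A hA)
    rcases Nat.eq_or_lt_of_le hta with rfl | hta'
    · -- t = a
      obtain ⟨A₀, hA₀⟩ := hne
      have h1 : 𝒜 ⊆ {A₀} := by
        intro B hB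
        have h2 := hint B hB A₀ hA₀
        have h3 : B ∩ A₀ = B := eq_of_subset_of_card_le inter_subset_left
          (by rw [hsized B hB]; exact h2)
        have h4 : B ⊆ A₀ := by rw [← h3]; exact inter_subset_right
        have h5 : B = A₀ := eq_of_subset_of_card_le h4
          (by rw [hsized B hB, hsized A₀ hA₀])
        simp [h5]
      have h2 : (∅ : Finset α) ∈ ∂^[t] 𝒜 := mem_shadow_iterate_iff_exists_sdiff.2
        ⟨A₀, hA₀, empty_subset _, by simpa using hsized A₀ hA₀⟩
      calc #𝒜 ≤ #({A₀} : Finset (Finset α)) := card_le_card h1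
      _ = 1 := card_singleton _
      _ ≤ #(∂^[t] 𝒜) := card_pos.2 ⟨∅, h2⟩
    rcases le_or_gt (#G) (2 * a - t) with hsmall | hbig
    · exact shadow_card_ge_of_small_ground G 𝒜 hsub hsized hta hsmall
    · -- big ground: shift towards some x ∈ G
      have hGne : G.Nonempty := card_pos.1 (by omega)
      obtain ⟨x, hx⟩ := hGne
      obtain ⟨ℬ, hcard, hsubB, hsizedB, hintB, hshadowB, hshift⟩ :=
        exists_shifted G x hx _ 𝒜 le_rfl hsub hsized hint
      rw [← hcard]
      refine le_trans ?_ (hshadowB t)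
      have hsplit : #(ℬ.memberSubfamily x) + #(ℬ.nonMemberSubfamily x) = #ℬ :=
        card_memberSubfamily_add_card_nonMemberSubfamily x ℬ
      have hG' : #(G.erase x) ≤ n := by rw [card_erase_of_mem hx]; omega
      -- ℬ₀ facts
      have h0sub : ∀ A ∈ ℬ.nonMemberSubfamily x, A ⊆ G.erase x := by
        intro A hA
        rw [mem_nonMemberSubfamily] at hA
        intro e he
        exact mem_erase.2 ⟨fun hc => hA.2 (hc ▸ he), hsubB A hA.1 he⟩
      have h0sized : ∀ A ∈ ℬ.nonMemberSubfamily x, #A = a := by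
        intro A hA; rw [mem_nonMemberSubfamily] at hA; exact hsizedB A hA.1
      have h0int : ∀ A ∈ ℬ.nonMemberSubfamily x, ∀ B ∈ ℬ.nonMemberSubfamily x,
          t ≤ #(A ∩ B) := by
        intro A hA B hB
        rw [mem_nonMemberSubfamily] at hA hB
        exact hintB A hA.1 B hB.1
      have IH0 : #(ℬ.nonMemberSubfamily x) ≤ #(∂^[t] (ℬ.nonMemberSubfamily x)) :=
        ih (G.erase x) hG' a t _ h0sub h0sized h0int hta
      -- ℬ₁ facts
      have h1sized : ∀ A ∈ ℬ.memberSubfamily x, #A = a - 1 := by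
        intro A hA
        rw [mem_memberSubfamily] at hA
        have := hsizedB _ hA.1
        rw [card_insert_of_notMem hA.2] at this
        omega
      have h1sub : ∀ A ∈ ℬ.memberSubfamily x, A ⊆ G.erase x := by
        intro A hA
        rw [mem_memberSubfamily] at hA
        intro e he
        exact mem_erase.2 ⟨fun hc => hA.2 (hc ▸ he), hsubB _ hA.1 (mem_insert_of_mem he)⟩
      have h1int : ∀ A ∈ ℬ.memberSubfamily x, ∀ B ∈ ℬ.memberSubfamily x, t ≤ #(A ∩ B) := by
        intro A hAm B hBm
        have hAs := h1sized A hAm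
        have hBs := h1sized B hBm
        have hAG := h1sub A hAm
        have hBG := h1sub B hBm
        rw [mem_memberSubfamily] at hAm hBm
        by_contra hlt
        push_neg at hlt
        have hins := hintB _ hAm.1 _ hBm.1
        have hxAB : x ∉ A ∩ B := fun hc => hAm.2 (mem_inter.1 hc).1
        have hiins : insert x A ∩ insert x B = insert x (A ∩ B) := by
          ext e
          simp only [mem_inter, mem_insert]
          tauto
        rw [hiins, card_insert_of_notMem hxAB] at hins
        have hABc := card_union_add_card_inter A B
        have hfresh : (G.erase x \ (A ∪ B)).Nonempty := by
          rw [← card_pos]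
          have hsubAB : A ∪ B ⊆ G.erase x := union_subset hAG hBG
          rw [card_sdiff_of_subset hsubAB, card_erase_of_mem hx]
          omega
        obtain ⟨i, hi⟩ := hfresh
        rw [mem_sdiff, mem_erase] at hi
        obtain ⟨⟨hix, hiG⟩, hiAB⟩ := hi
        have hcomp := hshift i hiG hix
        have hmem : UV.compress {i} {x} (insert x A) ∈ 𝓒 {i} {x} ℬ :=
          UV.compress_mem_compression hAm.1
        rw [show (𝓒 {i} {x} ℬ) = ℬ from hcomp] at hmem
        rw [compress_move (by
            rw [mem_insert]
            push_neg
            exact ⟨hix, fun hc => hiAB (mem_union_left _ hc)⟩)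
          (mem_insert_self x A) hix, erase_insert hAm.2] at hmem
        have hfin := hintB _ hmem _ hBm.1
        have heq : insert i A ∩ insert x B = A ∩ B := by
          ext e
          simp only [mem_inter, mem_insert]
          constructor
          · rintro ⟨rfl | heA, hB'⟩
            · rcases hB' with rfl | heB
              · exact absurd rfl hix
              · exact absurd (mem_union_right _ heB) hiAB
            · rcases hB' with rfl | heB
              · exact absurd heA hAm.2
              · exact ⟨heA, heB⟩
          · rintro ⟨heA, heB⟩
            exact ⟨Or.inr heA, Or.inr heB⟩
        rw [heq] at hfin
        omega
      have hta1 : t ≤ a - 1 := by omega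
      have IH1 : #(ℬ.memberSubfamily x) ≤ #(∂^[t] (ℬ.memberSubfamily x)) :=
        ih (G.erase x) hG' (a - 1) t _ h1sub h1sized h1int hta1
      -- assemble the two shadows
      have hB0sub : ℬ.nonMemberSubfamily x ⊆ ℬ := filter_subset _ _
      have hxnotin : ∀ S ∈ ∂^[t] (ℬ.memberSubfamily x), x ∉ S := by
        intro S hS hxS
        obtain ⟨B, hB, hSB, -⟩ := mem_shadow_iterate_iff_exists_sdiff.1 hS
        rw [mem_memberSubfamily] at hB
        exact hB.2 (hSB hxS)
      have hunion : (∂^[t] (ℬ.nonMemberSubfamily x)) ∪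
          (∂^[t] (ℬ.memberSubfamily x)).image (insert x) ⊆ ∂^[t] ℬ := by
        intro S hS
        rcases mem_union.1 hS with hS | hS
        · exact (shadow_monotone.iterate t hB0sub) hS
        · obtain ⟨S', hS', rfl⟩ := mem_image.1 hS
          obtain ⟨B, hB, hSB, hcard'⟩ := mem_shadow_iterate_iff_exists_sdiff.1 hS'
          have hxS' : x ∉ S' := hxnotin S' hS'
          rw [mem_memberSubfamily] at hB
          refine mem_shadow_iterate_iff_exists_sdiff.2
            ⟨insert x B, hB.1, insert_subset_insert x hSB, ?_⟩
          have heq : insert x B \ insert x S' = B \ S' := by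
            ext e
            simp only [mem_sdiff, mem_insert]
            constructor
            · rintro ⟨rfl | heB, h2⟩
              · exact absurd (Or.inl rfl) h2
              · push_neg at h2
                exact ⟨heB, h2.2⟩
            · rintro ⟨heB, heS⟩
              refine ⟨Or.inr heB, ?_⟩
              push_neg
              exact ⟨fun hc => hB.2 (hc ▸ heB), heS⟩
          rw [heq, hcard']
      have hdisj : Disjoint (∂^[t] (ℬ.nonMemberSubfamily x))
          ((∂^[t] (ℬ.memberSubfamily x)).image (insert x)) := by
        rw [disjoint_left]
        intro S hS0 hS1
        obtain ⟨B, hB, hSB, -⟩ := mem_shadow_iterate_iff_exists_sdiff.1 hS0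
        rw [mem_nonMemberSubfamily] at hB
        obtain ⟨S', hS', rfl⟩ := mem_image.1 hS1
        exact hB.2 (hSB (mem_insert_self x S'))
      have hinj : #((∂^[t] (ℬ.memberSubfamily x)).image (insert x))
          = #(∂^[t] (ℬ.memberSubfamily x)) := by
        apply card_image_of_injOn
        intro S hS S2 hS2 he
        have h1 := hxnotin S hS
        have h2 := hxnotin S2 hS2
        calc S = (insert x S).erase x := (erase_insert h1).symm
        _ = (insert x S2).erase x := by rw [he]
        _ = S2 := erase_insert h2
      calc #ℬ = #(ℬ.memberSubfamily x) + #(ℬ.nonMemberSubfamily x) := hsplit.symm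
      _ ≤ #(∂^[t] (ℬ.memberSubfamily x)) + #(∂^[t] (ℬ.nonMemberSubfamily x)) :=
          add_le_add IH1 IH0
      _ = #(∂^[t] (ℬ.nonMemberSubfamily x)) +
            #((∂^[t] (ℬ.memberSubfamily x)).image (insert x)) := by rw [hinj]; ring
      _ = #((∂^[t] (ℬ.nonMemberSubfamily x)) ∪
            (∂^[t] (ℬ.memberSubfamily x)).image (insert x)) :=
          (card_union_of_disjoint hdisj).symm
      _ ≤ #(∂^[t] ℬ) := card_le_card hunion


/-! ### Down-compression and diameter -/

def Diam (D : ℕ) (𝒮 : Finset (Finset α)) : Prop := ∀ s ∈ 𝒮, ∀ r ∈ 𝒮, #(s ∆ r) ≤ D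

lemma diam_down (b : α) {D : ℕ} {𝒮 : Finset (Finset α)} (h : Diam D 𝒮) :
    Diam D (𝓓 b 𝒮) := by
  have aux : ∀ s, (s ∉ 𝒮 ∧ insert b s ∈ 𝒮) → ∀ r, (r ∈ 𝒮 ∧ r.erase b ∈ 𝒮) → #(s ∆ r) ≤ D := by
    rintro s ⟨hs1, hs2⟩ r ⟨hr1, hr2⟩
    have hbs : b ∉ s := fun hc => hs1 (by rwa [insert_eq_of_mem hc] at hs2)
    by_cases hbr : b ∈ r
    · have heq : s ∆ r = (insert b s) ∆ (r.erase b) := by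
        ext e
        by_cases heb : e = b
        · subst heb; simp [mem_symmDiff, hbs, hbr]
        · simp [mem_symmDiff, mem_insert, mem_erase, heb]
      rw [heq]; exact h _ hs2 _ hr2
    · have hsub : s ∆ r ⊆ (insert b s) ∆ r := by
        intro e he
        rw [mem_symmDiff] at he ⊢
        rcases he with ⟨h1, h2⟩ | ⟨h1, h2⟩
        · exact Or.inl ⟨mem_insert_of_mem h1, h2⟩
        · refine Or.inr ⟨h1, ?_⟩
          rw [mem_insert]
          push_neg
          exact ⟨fun hc => hbr (hc ▸ h1), h2⟩
      exact le_trans (card_le_card hsub) (h _ hs2 _ hr1)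
  intro s hs r hr
  rcases Down.mem_compression.1 hs with ⟨hs1, hs2⟩ | hsm <;>
    rcases Down.mem_compression.1 hr with ⟨hr1, hr2⟩ | hrm
  · exact h s hs1 r hr1
  · rw [symmDiff_comm]
    exact aux r hrm s ⟨hs1, hs2⟩
  · exact aux s hsm r ⟨hr1, hr2⟩
  · obtain ⟨hs1, hs2⟩ := hsm
    obtain ⟨hr1, hr2⟩ := hrm
    have hbs : b ∉ s := fun hc => hs1 (by rwa [insert_eq_of_mem hc] at hs2)
    have hbr : b ∉ r := fun hc => hr1 (by rwa [insert_eq_of_mem hc] at hr2)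
    have heq : s ∆ r = (insert b s) ∆ (insert b r) := by
      ext e
      by_cases heb : e = b
      · subst heb; simp [mem_symmDiff, hbs, hbr]
      · simp [mem_symmDiff, mem_insert, heb]
    rw [heq]; exact h _ hs2 _ hr2

lemma exists_downclosed {D : ℕ} : ∀ (N : ℕ) (𝒮 : Finset (Finset α)),
    (∑ s ∈ 𝒮, #s) ≤ N → Diam D 𝒮 →
    ∃ 𝒟 : Finset (Finset α), #𝒟 = #𝒮 ∧ Diam D 𝒟 ∧ ∀ s ∈ 𝒟, ∀ b, s.erase b ∈ 𝒟 := by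
  have done_case : ∀ 𝒮 : Finset (Finset α), Diam D 𝒮 →
      (¬ ∃ s ∈ 𝒮, ∃ b ∈ s, s.erase b ∉ 𝒮) →
      ∃ 𝒟 : Finset (Finset α), #𝒟 = #𝒮 ∧ Diam D 𝒟 ∧ ∀ s ∈ 𝒟, ∀ b, s.erase b ∈ 𝒟 := by
    intro 𝒮 hdiam hready
    push_neg at hready
    refine ⟨𝒮, rfl, hdiam, fun s hs b => ?_⟩
    by_cases hb : b ∈ s
    · exact hready s hs b hb
    · rwa [erase_eq_of_notMem hb]
  have decrease : ∀ (𝒮 : Finset (Finset α)) (s₀ : Finset α) (b : α), s₀ ∈ 𝒮 → b ∈ s₀ →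
      s₀.erase b ∉ 𝒮 → ∑ s ∈ 𝓓 b 𝒮, #s < ∑ s ∈ 𝒮, #s := by
    intro 𝒮 s₀ b hs₀ hb hbad
    rw [Down.compression, sum_disjUnion]
    have himg : ({s ∈ 𝒮.image fun s => s.erase b | s ∉ 𝒮})
        = ({s ∈ 𝒮 | s.erase b ∉ 𝒮}).image (fun s => s.erase b) := by
      rw [filter_image]
    rw [himg, sum_image (by
      intro w1 h1 w2 h2 he
      rw [mem_coe, mem_filter] at h1 h2
      have hb1 : b ∈ w1 := by
        by_contra hc
        rw [erase_eq_of_notMem hc] at h1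
        exact h1.2 h1.1
      have hb2 : b ∈ w2 := by
        by_contra hc
        rw [erase_eq_of_notMem hc] at h2
        exact h2.2 h2.1
      exact erase_injOn' b hb1 hb2 he)]
    have hsum := sum_filter_add_sum_filter_not 𝒮 (fun s => s.erase b ∈ 𝒮) (fun s => #s)
    have hne2 : ({s ∈ 𝒮 | s.erase b ∉ 𝒮}).Nonempty := ⟨s₀, mem_filter.2 ⟨hs₀, hbad⟩⟩
    have hstrict : ∑ w ∈ {s ∈ 𝒮 | s.erase b ∉ 𝒮}, #(w.erase b)
        < ∑ w ∈ {s ∈ 𝒮 | s.erase b ∉ 𝒮}, #w := by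
      apply sum_lt_sum_of_nonempty hne2
      intro w hw
      rw [mem_filter] at hw
      have hbw : b ∈ w := by
        by_contra hc
        rw [erase_eq_of_notMem hc] at hw
        exact hw.2 hw.1
      rw [card_erase_of_mem hbw]
      have : 1 ≤ #w := card_pos.2 ⟨b, hbw⟩
      omega
    omega
  intro N
  induction N with
  | zero =>
    intro 𝒮 hN hdiam
    by_cases hready : ∃ s ∈ 𝒮, ∃ b ∈ s, s.erase b ∉ 𝒮
    · exfalso
      obtain ⟨s₀, hs₀, b, hb, hbad⟩ := hready
      have h1 : #s₀ ≤ ∑ s ∈ 𝒮, #s := single_le_sum (fun i _ => Nat.zero_le _) hs₀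
      have h2 : 1 ≤ #s₀ := card_pos.2 ⟨b, hb⟩
      omega
    · exact done_case 𝒮 hdiam hready
  | succ N ih =>
    intro 𝒮 hN hdiam
    by_cases hready : ∃ s ∈ 𝒮, ∃ b ∈ s, s.erase b ∉ 𝒮
    · obtain ⟨s₀, hs₀, b, hb, hbad⟩ := hready
      have hlt := decrease 𝒮 s₀ b hs₀ hb hbad
      obtain ⟨𝒟, h1, h2, h3⟩ := ih (𝓓 b 𝒮) (by omega) (diam_down b hdiam)
      exact ⟨𝒟, by rw [h1, Down.card_compression], h2, h3⟩
    · exact done_case 𝒮 hdiam hready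

lemma downclosed_mem {𝒟 : Finset (Finset α)} (h : ∀ s ∈ 𝒟, ∀ b, s.erase b ∈ 𝒟) :
    ∀ (k : ℕ) (s r : Finset α), s ∈ 𝒟 → r ⊆ s → #s ≤ #r + k → r ∈ 𝒟 := by
  intro k
  induction k with
  | zero =>
    intro s r hs hrs hc
    have : r = s := eq_of_subset_of_card_le hrs (by omega)
    rwa [this]
  | succ k ih =>
    intro s r hs hrs hc
    by_cases hsr : s ⊆ r
    · have : r = s := Subset.antisymm hrs hsr
      rwa [this]
    · obtain ⟨b, hbs, hbr⟩ := not_subset.1 hsr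
      refine ih (s.erase b) r (h s hs b) (subset_erase.2 ⟨hrs, hbr⟩) ?_
      rw [card_erase_of_mem hbs]
      omega

lemma union_bound {D : ℕ} {𝒟 : Finset (Finset α)} (hd : Diam D 𝒟)
    (hdc : ∀ s ∈ 𝒟, ∀ b, s.erase b ∈ 𝒟) :
    ∀ s ∈ 𝒟, ∀ r ∈ 𝒟, #(s ∪ r) ≤ D := by
  intro s hs r hr
  have h1 : r \ s ∈ 𝒟 := downclosed_mem hdc #r r (r \ s) hr sdiff_subset (by omega)
  have h2 := hd s hs _ h1
  have h3 : s ∆ (r \ s) = s ∪ r := by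
    rw [Disjoint.symmDiff_eq_sup disjoint_sdiff, sup_eq_union, union_sdiff_self_eq_union]
  rwa [h3] at h2

end Kl

/-- Kleitman's theorem, odd case. -/
theorem kleitman_odd (d t : ℕ) (hd : 2 * t + 1 < d) (A : Finset (Fin d → Bool))
    (hA : ∀ u ∈ A, ∀ v ∈ A, distB u v ≤ 2 * t + 1) :
    A.card ≤ 2 * ∑ i ∈ Finset.range (t + 1), (d - 1).choose i := by
  classical
  -- pass to support sets
  set supp : (Fin d → Bool) → Finset (Fin d) :=
    fun v => Finset.univ.filter (fun i => v i = true) with hsupp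
  have hinj : Function.Injective supp := by
    intro u v h
    funext i
    have h1 : (u i = true) ↔ (v i = true) := by
      constructor <;> intro hh
      · have h2 : i ∈ supp u := mem_filter.2 ⟨mem_univ _, hh⟩
        rw [h] at h2
        exact (mem_filter.1 h2).2
      · have h2 : i ∈ supp v := mem_filter.2 ⟨mem_univ _, hh⟩
        rw [← h] at h2
        exact (mem_filter.1 h2).2
    cases hu : u i <;> cases hv : v i <;> simp_all
  have hdist : ∀ u v, distB u v = #(supp u ∆ supp v) := by
    intro u v
    unfold distB
    have heq : (Finset.univ.filter fun i => u i ≠ v i) = supp u ∆ supp v := by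
      ext i
      simp only [hsupp, mem_symmDiff, mem_filter, mem_univ, true_and]
      cases hu : u i <;> cases hv : v i <;> simp
    rw [heq]
  set 𝒮 : Finset (Finset (Fin d)) := A.image supp with h𝒮
  have hcardS : #𝒮 = #A := card_image_of_injective _ hinj
  have hdiam : Kl.Diam (2 * t + 1) 𝒮 := by
    intro s hs r hr
    obtain ⟨u, hu, rfl⟩ := mem_image.1 hs
    obtain ⟨v, hv, rfl⟩ := mem_image.1 hr
    rw [← hdist u v]
    exact hA u hu v hv
  obtain ⟨𝒟, hDcard, hDdiam, hDer⟩ := Kl.exists_downclosed _ 𝒮 le_rfl hdiam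
  have hU : ∀ s ∈ 𝒟, ∀ r ∈ 𝒟, #(s ∪ r) ≤ 2 * t + 1 := Kl.union_bound hDdiam hDer
  -- level decomposition
  set F : ℕ → Finset (Finset (Fin d)) := fun j => 𝒟.filter (fun s => #s = j) with hF
  have hmemF : ∀ j, ∀ s ∈ F j, s ∈ 𝒟 ∧ #s = j := by
    intro j s hs
    exact mem_filter.1 hs
  have hcardsum : #𝒟 = ∑ j ∈ range (2 * t + 2), #(F j) := by
    apply card_eq_sum_card_fiberwise
    intro s hs
    rw [mem_coe, mem_range]
    have := hU s hs s hs
    rw [union_self] at this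
    omega
  have hsizedF : ∀ j, Set.Sized j ((F j : Finset (Finset (Fin d))) : Set (Finset (Fin d))) :=
    fun j s hs => (mem_filter.1 hs).2
  have b1 : ∀ j, #(F j) ≤ d.choose j := by
    intro j
    have := Set.Sized.card_le (hsizedF j)
    rwa [Fintype.card_fin] at this
  -- level t+1 : EKR
  have b2 : #(F (t + 1)) ≤ (d - 1).choose t := by
    have hint : ((F (t + 1) : Finset (Finset (Fin d))) : Set (Finset (Fin d))).Intersecting := by
      intro s hs r hr hdisj
      have h1 := hU s (mem_filter.1 hs).1 r (mem_filter.1 hr).1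
      have h2 : #(s ∪ r) = #s + #r := card_union_of_disjoint hdisj
      have h3 := (mem_filter.1 hs).2
      have h4 := (mem_filter.1 hr).2
      omega
    have := erdos_ko_rado hint (hsizedF (t + 1)) (by omega)
    simpa using this
  -- paired levels
  have b3 : ∀ i ∈ range t, #(F (2 * t + 1 - i)) + #(F (i + 1)) ≤ d.choose (i + 1) := by
    intro i hi
    rw [mem_range] at hi
    rcases (F (2 * t + 1 - i)).eq_empty_or_nonempty with he | hne
    · rw [he]
      simpa using b1 (i + 1)
    · have hii : 2 * t + 1 - i ≤ 2 * t + 1 := by omega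
      have h𝒞sized : Set.Sized (d - (2 * t + 1 - i))
          (((F (2 * t + 1 - i))ᶜˢ : Finset (Finset (Fin d))) : Set (Finset (Fin d))) := by
        intro X hX
        rw [mem_coe, mem_compls] at hX
        have h1 := (hsizedF (2 * t + 1 - i)) hX
        have h2 : #(Xᶜᶜ) = Fintype.card (Fin d) - #(Xᶜ) := card_compl _
        rw [compl_compl, Fintype.card_fin, h1] at h2
        exact h2
      have h𝒞int : ∀ X ∈ (F (2 * t + 1 - i))ᶜˢ, ∀ Y ∈ (F (2 * t + 1 - i))ᶜˢ,
          (d - (2 * t + 2)) ≤ #(X ∩ Y) := by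
        intro X hX Y hY
        rw [mem_compls] at hX hY
        have hu := hU _ ((mem_filter.1 hX).1) _ ((mem_filter.1 hY).1)
        have heq : X ∩ Y = (Xᶜ ∪ Yᶜ)ᶜ := by rw [compl_union, compl_compl, compl_compl]
        rw [heq, card_compl, Fintype.card_fin]
        omega
      have hksh := Kl.ksh d (univ : Finset (Fin d)) (by simp)
        (d - (2 * t + 1 - i)) (d - (2 * t + 2)) ((F (2 * t + 1 - i))ᶜˢ)
        (fun X _ => subset_univ X) (fun X hX => h𝒞sized hX) h𝒞int (by omega)
      set k' := d - (2 * t + 2) with hk'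
      have h𝒟sized : Set.Sized (i + 1)
          ((∂^[k'] ((F (2 * t + 1 - i))ᶜˢ) : Finset (Finset (Fin d))) : Set (Finset (Fin d))) := by
        have := Set.Sized.shadow_iterate (k := k') h𝒞sized
        have harith : d - (2 * t + 1 - i) - k' = i + 1 := by omega
        rwa [harith] at this
      have hdisj2 : Disjoint (∂^[k'] ((F (2 * t + 1 - i))ᶜˢ)) (F (i + 1)) := by
        rw [disjoint_left]
        intro X hX hXF
        obtain ⟨Y, hY, hXY, -⟩ := mem_shadow_iterate_iff_exists_sdiff.1 hX
        rw [mem_compls] at hY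
        have hdXY : Disjoint X Yᶜ := disjoint_compl_right.mono_left hXY
        have h1 := hU X ((mem_filter.1 hXF).1) Yᶜ ((mem_filter.1 hY).1)
        have h2 : #(X ∪ Yᶜ) = #X + #Yᶜ := card_union_of_disjoint hdXY
        have h3 := (hsizedF (i + 1)) hXF
        have h4 := (hsizedF (2 * t + 1 - i)) hY
        omega
      have hle : #(F (2 * t + 1 - i)) ≤ #(∂^[k'] ((F (2 * t + 1 - i))ᶜˢ)) := by
        rw [← card_compls (F (2 * t + 1 - i))]
        exact hksh
      have hfinal : #(F (i + 1)) + #(F (2 * t + 1 - i)) ≤ d.choose (i + 1) := by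
        calc #(F (i + 1)) + #(F (2 * t + 1 - i))
            ≤ #(F (i + 1)) + #(∂^[k'] ((F (2 * t + 1 - i))ᶜˢ)) := by omega
        _ = #(F (i + 1) ∪ ∂^[k'] ((F (2 * t + 1 - i))ᶜˢ)) :=
            (card_union_of_disjoint hdisj2.symm).symm
        _ ≤ d.choose (i + 1) := by
            have hsz : Set.Sized (i + 1)
                ((F (i + 1) ∪ ∂^[k'] ((F (2 * t + 1 - i))ᶜˢ) : Finset (Finset (Fin d))) :
                  Set (Finset (Fin d))) := by
              intro S hS
              rw [mem_coe, mem_union] at hS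
              rcases hS with hS | hS
              · exact (hsizedF (i + 1)) hS
              · exact h𝒟sized hS
            have := Set.Sized.card_le hsz
            rwa [Fintype.card_fin] at this
      omega
  -- final summation
  obtain ⟨e, rfl⟩ : ∃ e, d = e + 1 := ⟨d - 1, by omega⟩
  simp only [Nat.add_sub_cancel] at b2
  have hsum2 : ∑ j ∈ range (2 * t + 2), #(F j)
      ≤ ∑ j ∈ range (t + 1), (e + 1).choose j + e.choose t := by
    have hsplit : ∑ j ∈ range (2 * t + 2), #(F j)
        = ∑ j ∈ range (t + 2), #(F j) + ∑ i ∈ range t, #(F (t + 2 + i)) := by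
      have h0 : 2 * t + 2 = (t + 2) + t := by ring
      rw [h0, sum_range_add]
    have hrefl : ∑ i ∈ range t, #(F (t + 2 + i)) = ∑ i ∈ range t, #(F (2 * t + 1 - i)) := by
      rw [← sum_range_reflect (fun i => #(F (t + 2 + i))) t]
      apply sum_congr rfl
      intro i hi
      rw [mem_range] at hi
      have h9 : t + 2 + (t - 1 - i) = 2 * t + 1 - i := by omega
      rw [h9]
    have hsplit2 : ∑ j ∈ range (t + 2), #(F j)
        = ∑ j ∈ range (t + 1), #(F j) + #(F (t + 1)) := sum_range_succ _ _
    have hsplit3 : ∑ j ∈ range (t + 1), #(F j)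
        = ∑ i ∈ range t, #(F (i + 1)) + #(F 0) := sum_range_succ' _ _
    have hpair : ∑ i ∈ range t, #(F (i + 1)) + ∑ i ∈ range t, #(F (2 * t + 1 - i))
        ≤ ∑ i ∈ range t, (e + 1).choose (i + 1) := by
      rw [← sum_add_distrib]
      apply sum_le_sum
      intro i hi
      have := b3 i hi
      omega
    have hF0 : #(F 0) ≤ 1 := by
      have := b1 0
      simpa using this
    have hchoosesplit : ∑ j ∈ range (t + 1), (e + 1).choose j
        = ∑ i ∈ range t, (e + 1).choose (i + 1) + 1 := by
      rw [sum_range_succ' (fun j => (e + 1).choose j) t]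
      simp
    omega
  have hid := Kl.sum_choose_id e t
  have hfin : #A = ∑ j ∈ range (2 * t + 2), #(F j) := by
    rw [← hcardsum, hDcard, hcardS]
  simp only [Nat.add_sub_cancel]
  omega
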